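/- Let V be a complex inner product space and let d, δ : V → V be linear maps with ⟪d x, y⟫ = ⟪x, δ y⟫ for all x, y ∈ V and with d ∘ d = 0; set ∇ = d∘δ + δ∘d. Assume there is a family (W_i)_{i∈I} of finite-dimensional subspaces of V, pairwise orthogonal, each invariant under both d and δ, whose supremum is all of V. Then the orthogonal complement of range d in V equals ker δ = ker(d∘δ) = ker ∇ ⊕ range δ, and the orthogonal complement of range δ equals ker d = ker(δ∘d) = ker ∇ ⊕ range d. -/

import Mathlib

section Aux

variable {V : Type*} [NormedAddCommGroup V] [InnerProductSpace ℂ V]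

private lemma hodge_aux_adj' (d δ : V →ₗ[ℂ] V)
    (hadj : ∀ x y : V, (inner ℂ (d x) y : ℂ) = inner ℂ x (δ y)) :
    ∀ x z : V, (inner ℂ x (d z) : ℂ) = inner ℂ (δ x) z := by
  intro x z
  rw [← inner_conj_symm, hadj, inner_conj_symm]

private lemma hodge_aux_two_zero {v w : V}
    (h : (inner ℂ v v : ℂ) + inner ℂ w w = 0) : v = 0 ∧ w = 0 := by
  rw [inner_self_eq_norm_sq_to_K, inner_self_eq_norm_sq_to_K] at h
  have h' : ‖v‖ ^ 2 + ‖w‖ ^ 2 = 0 := by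
    have := congrArg Complex.re h
    simpa [← Complex.ofReal_pow] using this
  constructor
  · have : ‖v‖ = 0 := by nlinarith [sq_nonneg ‖v‖, sq_nonneg ‖w‖]
    simpa [← Complex.ofReal_pow] using this
  · have : ‖w‖ = 0 := by nlinarith [sq_nonneg ‖v‖, sq_nonneg ‖w‖]
    simpa [← Complex.ofReal_pow] using this

end Aux

/-- The corollary to the Hodge decomposition theorem of the paper: under the hypotheses of the
Hodge decomposition, the orthogonal complement of `range d` equals
`ker δ = ker (d ∘ δ) = ker ∇ ⊕ range δ`, and the orthogonal complement of `range δ` equals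
`ker d = ker (δ ∘ d) = ker ∇ ⊕ range d`, where `∇ = dδ + δd`. -/
theorem hodge_decomposition_orthogonal_complements
    {V : Type*} [NormedAddCommGroup V] [InnerProductSpace ℂ V]
    (d δ : V →ₗ[ℂ] V)
    (hadj : ∀ x y : V, (inner ℂ (d x) y : ℂ) = inner ℂ x (δ y))
    (hd2 : d ∘ₗ d = 0)
    {I : Type*} (W : I → Submodule ℂ V)
    (hfin : ∀ i, FiniteDimensional ℂ (W i))
    (horth : ∀ i j, i ≠ j → ∀ x ∈ W i, ∀ y ∈ W j, (inner ℂ x y : ℂ) = 0)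
    (hdinv : ∀ i, ∀ x ∈ W i, d x ∈ W i)
    (hδinv : ∀ i, ∀ x ∈ W i, δ x ∈ W i)
    (hsup : (⨆ i, W i) = ⊤) :
    ((LinearMap.range d)ᗮ = LinearMap.ker δ ∧
      LinearMap.ker δ = LinearMap.ker (d ∘ₗ δ) ∧
      Disjoint (LinearMap.ker (d ∘ₗ δ + δ ∘ₗ d)) (LinearMap.range δ) ∧
      LinearMap.ker δ = LinearMap.ker (d ∘ₗ δ + δ ∘ₗ d) ⊔ LinearMap.range δ) ∧
    ((LinearMap.range δ)ᗮ = LinearMap.ker d ∧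
      LinearMap.ker d = LinearMap.ker (δ ∘ₗ d) ∧
      Disjoint (LinearMap.ker (d ∘ₗ δ + δ ∘ₗ d)) (LinearMap.range d) ∧
      LinearMap.ker d = LinearMap.ker (d ∘ₗ δ + δ ∘ₗ d) ⊔ LinearMap.range d) := by
  have adj' := hodge_aux_adj' d δ hadj
  have hdd : ∀ x : V, d (d x) = 0 := fun x => by
    have := LinearMap.ext_iff.mp hd2 x; simpa using this
  -- δ ∘ δ = 0
  have hδδ : ∀ y : V, δ (δ y) = 0 := by
    intro y
    have h1 : (inner ℂ (δ (δ y)) (δ (δ y)) : ℂ) = inner ℂ (d (δ (δ y))) (δ y) := (hadj _ _).symm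
    have h2 : (inner ℂ (d (δ (δ y))) (δ y) : ℂ) = inner ℂ (d (d (δ (δ y)))) y := (hadj _ _).symm
    rw [hdd] at h2
    simp at h2
    have := h1.trans h2
    exact inner_self_eq_zero.mp this
  -- membership in kernel of ∇ gives dx = 0 and δx = 0
  have hkerN : ∀ x : V, (d ∘ₗ δ + δ ∘ₗ d) x = 0 → d x = 0 ∧ δ x = 0 := by
    intro x hx
    simp only [LinearMap.add_apply, LinearMap.comp_apply] at hx
    have h1 : (inner ℂ x (d (δ x) + δ (d x)) : ℂ) = 0 := by rw [hx]; simp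
    rw [inner_add_right, adj' x (δ x), ← hadj x (d x)] at h1
    -- h1 : inner (δ x) (δ x) + inner (d x) (d x) = 0
    have := hodge_aux_two_zero h1
    exact ⟨this.2, this.1⟩
  -- the converse direction
  have hkerN' : ∀ x : V, d x = 0 → δ x = 0 → (d ∘ₗ δ + δ ∘ₗ d) x = 0 := by
    intro x h1 h2
    simp [LinearMap.add_apply, LinearMap.comp_apply, h1, h2]
  -- full Hodge decomposition
  have hfull : ∀ x : V, x ∈ LinearMap.ker (d ∘ₗ δ + δ ∘ₗ d) ⊔
      (LinearMap.range d ⊔ LinearMap.range δ) := by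
    intro x
    have hx : x ∈ (⨆ i, W i) := by rw [hsup]; trivial
    rw [show (⨆ i, W i) = ⨆ i, W i from rfl] at hx
    induction hx using Submodule.iSup_induction' with
    | mem i y hy =>
      haveI := hfin i
      haveI : FiniteDimensional ℂ ((W i).map d) := Module.Finite.map _ _
      haveI : FiniteDimensional ℂ ((W i).map δ) := Module.Finite.map _ _
      set S : Submodule ℂ V := (W i).map d ⊔ (W i).map δ with hS
      haveI : FiniteDimensional ℂ S := Submodule.finiteDimensional_sup _ _
      haveI : S.HasOrthogonalProjection := inferInstance
      set p : V := (S.orthogonalProjectionOnto y : V) with hp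
      have hpS : p ∈ S := (S.orthogonalProjectionOnto y).2
      have hq : y - p ∈ Sᗮ := S.sub_starProjection_mem_orthogonal y
      have hSW : S ≤ W i := by
        apply sup_le
        · rintro _ ⟨z, hz, rfl⟩; exact hdinv i z hz
        · rintro _ ⟨z, hz, rfl⟩; exact hδinv i z hz
      have hqW : y - p ∈ W i := Submodule.sub_mem _ hy (hSW hpS)
      -- d (y - p) = 0
      have hdq : d (y - p) = 0 := by
        have h1 : δ (d (y - p)) ∈ S := le_sup_right (α := Submodule ℂ V) ⟨d (y - p), hdinv i _ hqW, rfl⟩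
        have h2 : (inner ℂ (δ (d (y - p))) (y - p) : ℂ) = 0 := (Submodule.mem_orthogonal _ _).mp hq _ h1
        have h3 : (inner ℂ (d (y - p)) (d (y - p)) : ℂ) = inner ℂ (y - p) (δ (d (y - p))) := hadj _ _
        rw [← inner_conj_symm (y - p) (δ (d (y - p))), h2] at h3
        exact (inner_self_eq_zero (𝕜 := ℂ)).mp (by simpa using h3)
      have hδq : δ (y - p) = 0 := by
        have h1 : d (δ (y - p)) ∈ S := le_sup_left (α := Submodule ℂ V) ⟨δ (y - p), hδinv i _ hqW, rfl⟩
        have h2 : (inner ℂ (d (δ (y - p))) (y - p) : ℂ) = 0 := (Submodule.mem_orthogonal _ _).mp hq _ h1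
        have h3 : (inner ℂ (y - p) (d (δ (y - p))) : ℂ) = inner ℂ (δ (y - p)) (δ (y - p)) := adj' _ _
        rw [← inner_conj_symm (y - p) (d (δ (y - p))), h2] at h3
        exact (inner_self_eq_zero (𝕜 := ℂ)).mp (by simpa using h3.symm)
      have : y = (y - p) + p := by abel
      rw [this]
      refine Submodule.add_mem_sup ?_ ?_
      · exact LinearMap.mem_ker.mpr (hkerN' _ hdq hδq)
      · refine (sup_le_sup ?_ ?_ : S ≤ LinearMap.range d ⊔ LinearMap.range δ) hpS <;>
          · rintro _ ⟨z, _, rfl⟩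
            exact ⟨z, rfl⟩
    | zero => exact Submodule.zero_mem _
    | add y z _ _ hy hz => exact Submodule.add_mem _ hy hz
  -- now the eight conclusions
  set K := LinearMap.ker (d ∘ₗ δ + δ ∘ₗ d) with hK
  have hKd : K ≤ LinearMap.ker d := fun x hx => LinearMap.mem_ker.mpr (hkerN x hx).1
  have hKδ : K ≤ LinearMap.ker δ := fun x hx => LinearMap.mem_ker.mpr (hkerN x hx).2
  refine ⟨⟨?_, ?_, ?_, ?_⟩, ?_, ?_, ?_, ?_⟩
  · -- (range d)ᗮ = ker δ
    ext x
    rw [Submodule.mem_orthogonal, LinearMap.mem_ker]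
    constructor
    · intro h
      have := h (d (δ x)) ⟨δ x, rfl⟩
      rw [hadj] at this
      exact (inner_self_eq_zero (𝕜 := ℂ)).mp this
    · rintro h _ ⟨y, rfl⟩
      rw [hadj, h]
      simp
  · -- ker δ = ker (d ∘ₗ δ)
    ext x
    simp only [LinearMap.mem_ker, LinearMap.comp_apply]
    constructor
    · intro h; rw [h]; simp
    · intro h
      have : (inner ℂ (d (δ x)) x : ℂ) = inner ℂ (δ x) (δ x) := hadj _ _
      rw [h] at this
      exact (inner_self_eq_zero (𝕜 := ℂ)).mp (by simpa using this.symm)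
  · -- Disjoint K (range δ)
    rw [Submodule.disjoint_def]
    rintro x hx ⟨y, rfl⟩
    have hdx : d (δ y) = 0 := (hkerN _ hx).1
    have : (inner ℂ y (d (δ y)) : ℂ) = inner ℂ (δ y) (δ y) := adj' _ _
    rw [hdx] at this
    exact (inner_self_eq_zero (𝕜 := ℂ)).mp (by simpa using this.symm)
  · -- ker δ = K ⊔ range δ
    refine le_antisymm ?_ (sup_le hKδ ?_)
    · intro x hx
      have hx' : δ x = 0 := hx
      obtain ⟨a, ha, b', hb', hab⟩ := Submodule.mem_sup.mp (hfull x)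
      obtain ⟨b, hb, c, hc, hbc⟩ := Submodule.mem_sup.mp hb'
      obtain ⟨y, rfl⟩ := hb
      obtain ⟨z, rfl⟩ := hc
      have hδa : δ a = 0 := (hkerN a ha).2
      have hδdy : δ (d y) = 0 := by
        have : δ x = δ a + (δ (d y) + δ (δ z)) := by rw [← hab, ← hbc]; simp
        rw [hx', hδa, hδδ] at this
        simpa using this.symm
      have hdy : d y = 0 := by
        have : (inner ℂ (d y) (d y) : ℂ) = inner ℂ y (δ (d y)) := hadj _ _
        rw [hδdy] at this
        exact (inner_self_eq_zero (𝕜 := ℂ)).mp (by simpa using this)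
      have hx2 : x = a + δ z := by rw [← hab, ← hbc, hdy]; simp
      rw [hx2]
      exact Submodule.add_mem_sup ha ⟨z, rfl⟩
    · rintro _ ⟨y, rfl⟩
      exact LinearMap.mem_ker.mpr (hδδ y)
  · -- (range δ)ᗮ = ker d
    ext x
    rw [Submodule.mem_orthogonal, LinearMap.mem_ker]
    constructor
    · intro h
      have h1 := h (δ (d x)) ⟨d x, rfl⟩
      have h2 : (inner ℂ (d x) (d x) : ℂ) = inner ℂ x (δ (d x)) := hadj _ _
      rw [← inner_conj_symm x (δ (d x)), h1] at h2
      exact (inner_self_eq_zero (𝕜 := ℂ)).mp (by simpa using h2)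
    · rintro h _ ⟨y, rfl⟩
      have : (inner ℂ x (δ y) : ℂ) = inner ℂ (d x) y := (hadj _ _).symm
      rw [h] at this
      rw [← inner_conj_symm (δ y) x, this]
      simp
  · -- ker d = ker (δ ∘ₗ d)
    ext x
    simp only [LinearMap.mem_ker, LinearMap.comp_apply]
    constructor
    · intro h; rw [h]; simp
    · intro h
      have : (inner ℂ (d x) (d x) : ℂ) = inner ℂ x (δ (d x)) := hadj _ _
      rw [h] at this
      exact (inner_self_eq_zero (𝕜 := ℂ)).mp (by simpa using this)
  · -- Disjoint K (range d)
    rw [Submodule.disjoint_def]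
    rintro x hx ⟨y, rfl⟩
    have hδx : δ (d y) = 0 := (hkerN _ hx).2
    have : (inner ℂ (d y) (d y) : ℂ) = inner ℂ y (δ (d y)) := hadj _ _
    rw [hδx] at this
    exact (inner_self_eq_zero (𝕜 := ℂ)).mp (by simpa using this)
  · -- ker d = K ⊔ range d
    refine le_antisymm ?_ (sup_le hKd ?_)
    · intro x hx
      have hx' : d x = 0 := hx
      obtain ⟨a, ha, b', hb', hab⟩ := Submodule.mem_sup.mp (hfull x)
      obtain ⟨b, hb, c, hc, hbc⟩ := Submodule.mem_sup.mp hb'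
      obtain ⟨y, rfl⟩ := hb
      obtain ⟨z, rfl⟩ := hc
      have hda : d a = 0 := (hkerN a ha).1
      have hdδz : d (δ z) = 0 := by
        have : d x = d a + (d (d y) + d (δ z)) := by rw [← hab, ← hbc]; simp
        rw [hx', hda, hdd] at this
        simpa using this.symm
      have hδz : δ z = 0 := by
        have : (inner ℂ z (d (δ z)) : ℂ) = inner ℂ (δ z) (δ z) := adj' _ _
        rw [hdδz] at this
        exact (inner_self_eq_zero (𝕜 := ℂ)).mp (by simpa using this.symm)
      have hx2 : x = a + d y := by rw [← hab, ← hbc, hδz]; simp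
      rw [hx2]
      exact Submodule.add_mem_sup ha ⟨y, rfl⟩
    · rintro _ ⟨y, rfl⟩
      exact LinearMap.mem_ker.mpr (hdd y)
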